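/- (Asymptotic Fluctuation Relations for canonical processes) Let Λ₀ : ℝⁿ → ℝ satisfy the symmetry Λ₀(𝓡ᵀk) = Λ₀(k) for all k ∈ ℝⁿ, where 𝓡 is an invertible n×n real matrix with transpose 𝓡ᵀ. Fix s ∈ ℝⁿ and define Λ_s(k) := Λ₀(k+s) − Λ₀(s) and I_s(a) := sup_{k∈ℝⁿ}(⟨k,a⟩ − Λ_s(k)). Then for every k ∈ ℝⁿ: Λ_s(k) = Λ_s(𝓡ᵀ(k+s) − s), and for every a ∈ ℝⁿ (as an equality in ℝ ∪ {+∞}): I_s(𝓡a) = ⟨s, a − 𝓡a⟩ + I_s(a). -/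

import Mathlib

open Matrix

private lemma ereal_add_iSup {ι : Type*} [Nonempty ι] (c : ℝ) (f : ι → EReal) :
    (c : EReal) + ⨆ i, f i = ⨆ i, ((c : EReal) + f i) := by
  have key : ∀ (d : ℝ) (g : ι → EReal), ⨆ i, ((d : EReal) + g i) ≤ (d : EReal) + ⨆ i, g i :=
    fun d g => iSup_le fun i => add_le_add le_rfl (le_iSup g i)
  refine le_antisymm ?_ (key c f)
  have hf : ∀ i, f i = ((-c : ℝ) : EReal) + ((c : EReal) + f i) := by
    intro i
    rw [← add_assoc, ← EReal.coe_add, neg_add_cancel, EReal.coe_zero, zero_add]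
  calc (c : EReal) + ⨆ i, f i
      = (c : EReal) + ⨆ i, (((-c : ℝ) : EReal) + ((c : EReal) + f i)) := by
        congr 1; exact iSup_congr hf
    _ ≤ (c : EReal) + (((-c : ℝ) : EReal) + ⨆ i, ((c : EReal) + f i)) :=
        add_le_add le_rfl (key (-c) _)
    _ = ⨆ i, ((c : EReal) + f i) := by
        rw [← add_assoc, ← EReal.coe_add, add_neg_cancel, EReal.coe_zero, zero_add]

/-- **Asymptotic Fluctuation Relations for canonical processes.**
Let `Λ₀ : ℝⁿ → ℝ` satisfy `Λ₀ (𝓡ᵀ *ᵥ k) = Λ₀ k` for all `k`, with `𝓡` invertible.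
Fix `s`, define `Λs k = Λ₀ (k + s) - Λ₀ s` and the Legendre–Fenchel transform
`Is a = ⨆ k, (⟪k,a⟫ - Λs k)` in `EReal`.  Then `Λs k = Λs (𝓡ᵀ *ᵥ (k + s) - s)` for all
`k`, and `Is (𝓡 *ᵥ a) = ⟪s, a - 𝓡 *ᵥ a⟫ + Is a` for all `a` (in `ℝ ∪ {+∞}`). -/
theorem canonical_asymptotic_FR
    {n : ℕ} (hn : 1 ≤ n)
    (𝓡 : Matrix (Fin n) (Fin n) ℝ) (h𝓡 : IsUnit 𝓡.det)
    (Λ₀ : (Fin n → ℝ) → ℝ) (hsym : ∀ k, Λ₀ (𝓡ᵀ *ᵥ k) = Λ₀ k)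
    (s : Fin n → ℝ)
    (Λs : (Fin n → ℝ) → ℝ) (hΛs : ∀ k, Λs k = Λ₀ (k + s) - Λ₀ s)
    (Is : (Fin n → ℝ) → EReal)
    (hIs : ∀ a, Is a = ⨆ k : Fin n → ℝ, ((k ⬝ᵥ a - Λs k : ℝ) : EReal)) :
    (∀ k : Fin n → ℝ, Λs k = Λs (𝓡ᵀ *ᵥ (k + s) - s)) ∧
    (∀ a : Fin n → ℝ, Is (𝓡 *ᵥ a) = ((s ⬝ᵥ (a - 𝓡 *ᵥ a) : ℝ) : EReal) + Is a) := by
  have part1 : ∀ k : Fin n → ℝ, Λs k = Λs (𝓡ᵀ *ᵥ (k + s) - s) := by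
    intro k
    rw [hΛs, hΛs, sub_add_cancel, hsym]
  refine ⟨part1, fun a => ?_⟩
  set c : ℝ := s ⬝ᵥ (a - 𝓡 *ᵥ a) with hc
  set e : (Fin n → ℝ) → (Fin n → ℝ) := fun k => 𝓡ᵀ *ᵥ (k + s) - s with he
  have hesurj : Function.Surjective e := by
    have h1 : Function.Surjective (fun v : Fin n → ℝ => 𝓡ᵀ *ᵥ v) := by
      refine (Matrix.mulVec_surjective_iff_isUnit.mpr ?_)
      rw [Matrix.isUnit_iff_isUnit_det, Matrix.det_transpose]
      exact h𝓡
    intro y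
    obtain ⟨v, hv⟩ := h1 (y + s)
    exact ⟨v - s, by simp [he, hv]⟩
  have hpt : ∀ k : Fin n → ℝ,
      (k ⬝ᵥ (𝓡 *ᵥ a) - Λs k : ℝ) = c + ((e k) ⬝ᵥ a - Λs (e k)) := by
    intro k
    rw [← part1 k]
    have : (e k) ⬝ᵥ a = (𝓡ᵀ *ᵥ (k + s)) ⬝ᵥ a - s ⬝ᵥ a := by
      simp [he, sub_dotProduct]
    rw [this]
    have h2 : (𝓡ᵀ *ᵥ (k + s)) ⬝ᵥ a = (k + s) ⬝ᵥ (𝓡 *ᵥ a) := by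
      rw [Matrix.mulVec_transpose, ← Matrix.dotProduct_mulVec]
    rw [h2]
    simp only [hc, add_dotProduct, dotProduct_sub]
    ring
  calc Is (𝓡 *ᵥ a)
      = ⨆ k : Fin n → ℝ, ((k ⬝ᵥ (𝓡 *ᵥ a) - Λs k : ℝ) : EReal) := hIs _
    _ = ⨆ k : Fin n → ℝ, ((c + ((e k) ⬝ᵥ a - Λs (e k)) : ℝ) : EReal) := by
        exact iSup_congr fun k => by rw [hpt k]
    _ = ⨆ k : Fin n → ℝ, ((c + (k ⬝ᵥ a - Λs k) : ℝ) : EReal) :=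
        hesurj.iSup_comp (g := fun k => ((c + (k ⬝ᵥ a - Λs k) : ℝ) : EReal))
    _ = ⨆ k : Fin n → ℝ, ((c : EReal) + ((k ⬝ᵥ a - Λs k : ℝ) : EReal)) := by
        exact iSup_congr fun k => by rw [EReal.coe_add]
    _ = (c : EReal) + Is a := by rw [hIs, ereal_add_iSup]
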